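/- Let (A, B) be a separation of order two of a graph G with A ∩ B = {x, y}. Let P_A be a maximum-length xy-path in G[A] (with vertex set V(P_A), taken to be empty if no xy-path exists in G[A]). If G has a cycle of length at least k, then G[A] has a cycle of length at least k, or the induced subgraph G[V(P_A) ∪ B] has a cycle of length at least k. -/

import Mathlib

open SimpleGraph

variable {V : Type*}

/-- Reachability within the subgraph of `G` induced by the vertex set `W`. -/
def ReachIn (G : SimpleGraph V) (W : Set V) (x y : V) : Prop :=
  ∃ (hx : x ∈ W) (hy : y ∈ W), (G.induce W).Reachable ⟨x, hx⟩ ⟨y, hy⟩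

/-- Removing `S` disconnects some connected component of `G`: there are two vertices
outside `S` that are connected in `G` but not in `G - S`. -/
def Separates (G : SimpleGraph V) (S : Set V) : Prop :=
  ∃ u v : V, u ∉ S ∧ v ∉ S ∧ G.Reachable u v ∧ ¬ ReachIn G Sᶜ u v

/-- `S` is a minimal separator of `G`. -/
def IsMinimalSeparator (G : SimpleGraph V) (S : Set V) : Prop :=
  Separates G S ∧ ∀ S' ⊂ S, ¬ Separates G S'

/-- `C` is a connected component of the subgraph of `G` induced by `W`. -/
def IsCompOf (G : SimpleGraph V) (C W : Set V) : Prop :=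
  C ⊆ W ∧ (G.induce C).Connected ∧ ∀ u ∈ C, ∀ v ∈ W, G.Adj u v → v ∈ C

/-- A separation `(A, B)` of a graph `G`. -/
def IsSeparation (G : SimpleGraph V) (A B : Set V) : Prop :=
  A ∪ B = Set.univ ∧ ∀ u ∈ A \ B, ∀ v ∈ B \ A, ¬ G.Adj u v

/-- `(T, X)` is a tree decomposition of `G`. -/
structure IsTreeDecomp {ι : Type*} (G : SimpleGraph V) (T : SimpleGraph ι)
    (X : ι → Set V) : Prop where
  isTree : T.IsTree
  covers_verts : ∀ v : V, ∃ i, v ∈ X i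
  covers_edges : ∀ ⦃u v : V⦄, G.Adj u v → ∃ i, u ∈ X i ∧ v ∈ X i
  subtree : ∀ v : V, (T.induce {i | v ∈ X i}).Connected

/-- The tree decomposition given by the bag function `X` has adhesion at most `d`. -/
def AdhesionLE {ι : Type*} (T : SimpleGraph ι) (X : ι → Set V) (d : ℕ) : Prop :=
  ∀ ⦃i j : ι⦄, T.Adj i j → (X i ∩ X j).ncard ≤ d

/-- The torso of the vertex set `W` in `G`: the induced subgraph `G[W]` with an edge added
between each pair of vertices of `W` connected by a path internally avoiding `W`. -/
def torso (G : SimpleGraph V) (W : Set V) : SimpleGraph W :=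
  SimpleGraph.fromRel (fun u v =>
    G.Adj u v ∨ ∃ p : G.Walk (u : V) (v : V), p.IsPath ∧
      ∀ z ∈ p.support, z ≠ (u : V) → z ≠ (v : V) → z ∉ W)

/-- One smoothing step: `K` is obtained from `H` by replacing the degree-2 vertex `v`,
whose two neighbors are `a` and `b`, by a direct edge between `a` and `b`. -/
def SmoothStep (H K : SimpleGraph.Subgraph (⊤ : SimpleGraph V)) : Prop :=
  ∃ v a b : V, a ≠ b ∧ a ≠ v ∧ b ≠ v ∧ v ∈ H.verts ∧ H.neighborSet v = {a, b} ∧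
    K.verts = H.verts \ {v} ∧
    ∀ x y : V, K.Adj x y ↔ ((H.Adj x y ∧ x ≠ v ∧ y ≠ v) ∨ (x = a ∧ y = b) ∨ (x = b ∧ y = a))

/-- `K` (a graph on a subset of the vertices of `G`) is a topological minor of `G`:
it is obtained from a subgraph of `G` by repeatedly smoothing degree-2 vertices. -/
def IsTopMinor (K : SimpleGraph.Subgraph (⊤ : SimpleGraph V)) (G : SimpleGraph V) : Prop :=
  ∃ H₀ : SimpleGraph.Subgraph (⊤ : SimpleGraph V),
    (∀ ⦃x y : V⦄, H₀.Adj x y → G.Adj x y) ∧ Relation.ReflTransGen SmoothStep H₀ K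

/-- An abstract graph `H` is a topological minor of `G` if it is isomorphic to some
topological minor of `G`. -/
def IsTopMinorGraph {W : Type*} (H : SimpleGraph W) (G : SimpleGraph V) : Prop :=
  ∃ K : SimpleGraph.Subgraph (⊤ : SimpleGraph V), IsTopMinor K G ∧ Nonempty (H ≃g K.coe)

/-- One edge-contraction step: `K` is obtained from `H` by contracting the edge `{a, b}`
(the vertex `b` is merged into `a`). -/
def ContractStep (H K : SimpleGraph.Subgraph (⊤ : SimpleGraph V)) : Prop :=
  ∃ a b : V, H.Adj a b ∧ K.verts = H.verts \ {b} ∧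
    ∀ x y : V, K.Adj x y ↔ (x ≠ b ∧ y ≠ b ∧ x ≠ y ∧
      (H.Adj x y ∨ (x = a ∧ H.Adj b y) ∨ (y = a ∧ H.Adj x b)))

/-- `G` contains `Hpat` as a minor: some graph obtained from a subgraph of `G` by
contracting edges is isomorphic to `Hpat`. -/
def HasMinor {W : Type*} (G : SimpleGraph V) (Hpat : SimpleGraph W) : Prop :=
  ∃ H₀ K : SimpleGraph.Subgraph (⊤ : SimpleGraph V),
    (∀ ⦃x y : V⦄, H₀.Adj x y → G.Adj x y) ∧ Relation.ReflTransGen ContractStep H₀ K ∧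
      Nonempty (Hpat ≃g K.coe)

/-- Planarity, via Wagner's theorem: no `K₅`-minor and no `K₃,₃`-minor. -/
def IsPlanar (G : SimpleGraph V) : Prop :=
  ¬ HasMinor G (completeGraph (Fin 5)) ∧ ¬ HasMinor G (completeBipartiteGraph (Fin 3) (Fin 3))

/-- A graph is triconnected if removing fewer than three vertices cannot disconnect it. -/
def Triconnected (G : SimpleGraph V) : Prop :=
  ∀ S : Set V, S.ncard < 3 → (G.induce Sᶜ).Preconnected

/-- A graph is claw-free if it has no induced `K_{1,3}`. -/
def ClawFree (G : SimpleGraph V) : Prop :=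
  ∀ v a b c : V, G.Adj v a → G.Adj v b → G.Adj v c → a ≠ b → a ≠ c → b ≠ c →
    ¬ G.Adj a b → ¬ G.Adj a c → G.Adj b c

namespace SimpleGraph.Walk

variable {G : SimpleGraph V}

/-- Convert a walk whose support lies in `s` to a walk in the induced subgraph. -/
def toInduce {s : Set V} : ∀ {u v : V} (p : G.Walk u v) (hp : ∀ w ∈ p.support, w ∈ s),
    (G.induce s).Walk ⟨u, hp u p.start_mem_support⟩ ⟨v, hp v p.end_mem_support⟩
  | _, _, nil, _ => nil
  | _, _, cons h p, hp => cons (by exact h) (p.toInduce fun w hw => hp w (by simp [hw]))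

lemma map_toInduce {s : Set V} : ∀ {u v : V} (p : G.Walk u v) (hp : ∀ w ∈ p.support, w ∈ s),
    (p.toInduce hp).map (Embedding.induce s).toHom = p
  | _, _, nil, _ => rfl
  | _, _, cons h p, hp => by
    simp only [toInduce, map_cons, cons.injEq, heq_eq_eq]
    exact congrArg (cons h) (map_toInduce p _)

lemma length_toInduce {s : Set V} {u v : V} (p : G.Walk u v) (hp : ∀ w ∈ p.support, w ∈ s) :
    (p.toInduce hp).length = p.length := by
  exact (length_map _ (p.toInduce hp)).symm.trans (congrArg length (map_toInduce p hp))

lemma isPath_toInduce {s : Set V} {u v : V} {p : G.Walk u v} (h : p.IsPath)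
    (hp : ∀ w ∈ p.support, w ∈ s) : (p.toInduce hp).IsPath := by
  rw [← map_isPath_iff_of_injective (f := (Embedding.induce s).toHom) Subtype.val_injective,
    map_toInduce]
  exact h

lemma isCycle_toInduce {s : Set V} {u : V} {p : G.Walk u u} (h : p.IsCycle)
    (hp : ∀ w ∈ p.support, w ∈ s) : (p.toInduce hp).IsCycle := by
  rw [← map_isCycle_iff_of_injective (f := (Embedding.induce s).toHom) Subtype.val_injective,
    map_toInduce]
  exact h

lemma crossing {A B : Set V} (hU : A ∪ B = Set.univ)
    (hE : ∀ u ∈ A \ B, ∀ v ∈ B \ A, ¬ G.Adj u v) :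
    ∀ {u v : V} (p : G.Walk u v), u ∈ A → v ∉ A → ∃ w ∈ p.support, w ∈ A ∩ B := by
  intro u v p
  induction p with
  | nil => exact fun hu hv => absurd hu hv
  | @cons u b v h p ih =>
    intro hu hv
    by_cases hb : b ∈ A
    · obtain ⟨w, hw1, hw2⟩ := ih hb hv
      exact ⟨w, by simp [hw1], hw2⟩
    · have hbB : b ∈ B := by
        have hb2 : b ∈ A ∪ B := hU ▸ Set.mem_univ b
        exact hb2.resolve_left hb
      by_cases huB : u ∈ B
      · exact ⟨u, by simp, hu, huB⟩
      · exact absurd h (hE u ⟨hu, huB⟩ b ⟨hbB, hb⟩)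

lemma mem_support_tail_of_ne {u v w : V} (p : G.Walk u v) (hw : w ∈ p.support) (hne : w ≠ u) :
    w ∈ p.support.tail := by
  rw [support_eq_cons] at hw
  exact (List.mem_cons.mp hw).resolve_left hne

lemma end_mem_support_tail {u v : V} (p : G.Walk u v) (hp : p.length ≠ 0) :
    v ∈ p.support.tail := by
  cases p with
  | nil => simp at hp
  | cons h q => simpa using q.end_mem_support

lemma length_rotate' [DecidableEq V] {u v : V} (c : G.Walk v v) (h : u ∈ c.support) :
    (c.rotate u h).length = c.length := by
  show ((c.dropUntil u h).append (c.takeUntil u h)).length = c.length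
  rw [length_append, add_comm, ← length_append, take_spec]

lemma mem_support_rotate_iff' [DecidableEq V] {v u w : V} (c : G.Walk v v) (hc : c.length ≠ 0)
    (h : u ∈ c.support) : w ∈ (c.rotate u h).support ↔ w ∈ c.support := by
  have h1 : ∀ (z : V) (d : G.Walk z z), d.length ≠ 0 → (w ∈ d.support ↔ w ∈ d.support.tail) := by
    intro z d hd
    constructor
    · intro hw
      rcases eq_or_ne w z with rfl | hne
      · exact end_mem_support_tail d hd
      · exact mem_support_tail_of_ne d hw hne
    · intro hw
      rw [support_eq_cons]
      exact List.mem_cons_of_mem _ hw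
  have hc' : (c.rotate u h).length ≠ 0 := by rw [length_rotate']; exact hc
  rw [h1 u (c.rotate u h) hc', h1 v c hc]
  exact (support_rotate c u h).perm.mem_iff

lemma cycle_split [DecidableEq V] {x y : V} {c : G.Walk x x} (hc : c.IsCycle)
    (hy : y ∈ c.support) (hxy : y ≠ x) :
    (c.takeUntil y hy).IsPath ∧ (c.dropUntil y hy).IsPath ∧
    (∀ w ∈ (c.takeUntil y hy).support, w ∈ (c.dropUntil y hy).support → w = x ∨ w = y) ∧
    (c.takeUntil y hy).length + (c.dropUntil y hy).length = c.length := by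
  set q := c.takeUntil y hy with hq
  set r := c.dropUntil y hy with hr
  have hspec : q.append r = c := take_spec c hy
  have htail : c.support.tail = q.support.tail ++ r.support.tail := by
    conv_lhs => rw [← hspec]
    exact tail_support_append q r
  have hnd : (q.support.tail ++ r.support.tail).Nodup := htail ▸ hc.support_nodup
  rw [List.nodup_append'] at hnd
  obtain ⟨hndq, hndr, hdisj⟩ := hnd
  have hrlen : r.length ≠ 0 := fun h0 => hxy (eq_of_length_eq_zero h0)
  have hxr : x ∈ r.support.tail := end_mem_support_tail r hrlen
  have hxq : x ∉ q.support.tail := fun hx => hdisj hx hxr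
  have hyq : y ∈ q.support.tail := mem_support_tail_of_ne q q.end_mem_support hxy
  have hyr : y ∉ r.support.tail := fun h => hdisj hyq h
  have hqpath : q.IsPath := by
    apply IsPath.mk'
    rw [support_eq_cons]
    exact List.nodup_cons.mpr ⟨hxq, hndq⟩
  have hrpath : r.IsPath := by
    apply IsPath.mk'
    rw [support_eq_cons]
    exact List.nodup_cons.mpr ⟨hyr, hndr⟩
  refine ⟨hqpath, hrpath, ?_, ?_⟩
  · intro w hwq hwr
    by_contra hcon
    push_neg at hcon
    exact hdisj (mem_support_tail_of_ne q hwq hcon.1)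
      (mem_support_tail_of_ne r hwr hcon.2)
  · rw [← length_append, hspec]

lemma path_side {A B : Set V} {x y : V} (hU : A ∪ B = Set.univ)
    (hE : ∀ u ∈ A \ B, ∀ v ∈ B \ A, ¬ G.Adj u v) (hAB : A ∩ B = {x, y})
    {q : G.Walk x y} (hq : q.IsPath) :
    (∀ w ∈ q.support, w ∈ A) ∨ (∀ w ∈ q.support, w ∈ B) := by
  classical
  by_contra hcon
  push_neg at hcon
  obtain ⟨⟨a, haS, haA⟩, ⟨b, hbS, hbB⟩⟩ := hcon
  have haB : a ∈ B := ((hU ▸ Set.mem_univ a : a ∈ A ∪ B)).resolve_left haA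
  have hbA : b ∈ A := ((hU ▸ Set.mem_univ b : b ∈ A ∪ B)).resolve_right hbB
  have haxy : a ∉ ({x, y} : Set V) := fun h => haA (hAB ▸ h : a ∈ A ∩ B).1
  have hbxy : b ∉ ({x, y} : Set V) := fun h => hbB (hAB ▸ h : b ∈ A ∩ B).2
  set q1 := q.takeUntil a haS with hq1
  set q2 := q.dropUntil a haS with hq2
  have hspec : q1.append q2 = q := take_spec q haS
  have hsupp : q.support = q1.support ++ q2.support.tail := by
    conv_lhs => rw [← hspec]; exact (support_append q1 q2)
  have hnd : (q1.support ++ q2.support.tail).Nodup := hsupp ▸ hq.support_nodup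
  rw [List.nodup_append'] at hnd
  obtain ⟨hndq1, hndq2t, hdisj⟩ := hnd
  have hxa : x ≠ a := fun h => haxy (h ▸ Set.mem_insert x {y})
  have hya : y ≠ a := fun h => haxy (h ▸ Set.mem_insert_of_mem x rfl)
  have hq2nd : q2.support.Nodup := by
    rw [support_eq_cons]
    refine List.nodup_cons.mpr ⟨?_, hndq2t⟩
    intro ha2
    exact hdisj q1.end_mem_support ha2
  have hbmem := hbS
  rw [hsupp, List.mem_append] at hbmem
  rcases hbmem with hb1 | hb2'
  · have hsub : (q1.dropUntil b hb1).support ⊆ q1.support := support_dropUntil_subset q1 hb1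
    obtain ⟨t, htS, htAB⟩ := crossing hU hE (q1.dropUntil b hb1) hbA haA
    rw [hAB] at htAB
    rcases htAB with rfl | rfl
    · have hxb : t ≠ b := fun h => hbxy (by simp [← h])
      have hxt : t ∈ (q1.dropUntil b hb1).support.tail :=
        mem_support_tail_of_ne _ htS hxb
      have h2 : q1.support
          = (q1.takeUntil b hb1).support ++ (q1.dropUntil b hb1).support.tail := by
        conv_lhs => rw [← take_spec q1 hb1]
        exact support_append _ _
      rw [h2, List.nodup_append'] at hndq1
      exact hndq1.2.2 (start_mem_support _) hxt
    · have hyq2 : t ∈ q2.support.tail :=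
        mem_support_tail_of_ne q2 q2.end_mem_support hya
      exact hdisj (hsub htS) hyq2
  · have hb2 : b ∈ q2.support := List.mem_of_mem_tail hb2'
    set w2 := q2.takeUntil b hb2 with hw2
    have hsub : w2.support ⊆ q2.support := support_takeUntil_subset q2 hb2
    obtain ⟨t, htS, htAB⟩ := crossing hU hE w2.reverse hbA haA
    rw [support_reverse, List.mem_reverse] at htS
    rw [hAB] at htAB
    rcases htAB with rfl | rfl
    · have hxq2 : t ∈ q2.support.tail :=
        mem_support_tail_of_ne q2 (hsub htS) hxa
      exact hdisj q1.start_mem_support hxq2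
    · have hyb : t ≠ b := fun h => hbxy (by simp [← h])
      have hyd : t ∈ (q2.dropUntil b hb2).support.tail :=
        mem_support_tail_of_ne _ (end_mem_support _) hyb
      have h2 : q2.support = w2.support ++ (q2.dropUntil b hb2).support.tail := by
        conv_lhs => rw [← take_spec q2 hb2]
        exact support_append _ _
      rw [h2, List.nodup_append'] at hq2nd
      exact hq2nd.2.2 htS hyd

lemma edge_ends_not_mem_edges {u v : V} {p : G.Walk u v} (hp : p.IsPath) (hlen : 2 ≤ p.length) :
    s(u, v) ∉ p.edges := by
  cases p with
  | nil => simp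
  | @cons u b v h p' =>
    intro hmem
    rw [edges_cons, List.mem_cons] at hmem
    rw [cons_isPath_iff] at hp
    rcases hmem with heq | hmem
    · rw [Sym2.eq_iff] at heq
      rcases heq with ⟨-, rfl⟩ | ⟨rfl, rfl⟩
      · -- v = b : p' is a path from v to v of positive length
        have hlen' : p'.length ≠ 0 := by
          simp only [length_cons] at hlen; omega
        have := end_mem_support_tail p' hlen'
        have h2 := hp.1.support_nodup
        rw [support_eq_cons, List.nodup_cons] at h2
        exact h2.1 this
      · exact hp.2 p'.end_mem_support
    · exact hp.2 (p'.fst_mem_support_of_mem_edges hmem)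

end SimpleGraph.Walk

/-- Reducing a `k`-cycle across a separation of order two: if `G` has a cycle of length at
least `k`, and `P_A` is a maximum-length `xy`-path in `G[A]` (empty if none exists),
then `G[A]` or `G[V(P_A) ∪ B]` has a cycle of length at least `k`. -/
theorem cycles_through_separation [Fintype V] (G : SimpleGraph V) (k : ℕ)
    (A B : Set V) (x y : V) (hsep : IsSeparation G A B) (hAB : A ∩ B = {x, y})
    (hxy : x ≠ y) (hxA : x ∈ A) (hyA : y ∈ A) (SP : Set V)
    (hSP : (∃ p : (G.induce A).Walk ⟨x, hxA⟩ ⟨y, hyA⟩, p.IsPath ∧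
        (∀ q : (G.induce A).Walk ⟨x, hxA⟩ ⟨y, hyA⟩, q.IsPath → q.length ≤ p.length) ∧
        SP = Subtype.val '' {a | a ∈ p.support}) ∨
      ((¬ ∃ p : (G.induce A).Walk ⟨x, hxA⟩ ⟨y, hyA⟩, p.IsPath) ∧ SP = ∅))
    (hk : ∃ (v : V) (c : G.Walk v v), c.IsCycle ∧ k ≤ c.length) :
    (∃ (v : A) (c : (G.induce A).Walk v v), c.IsCycle ∧ k ≤ c.length) ∨
    (∃ (v : ↥(SP ∪ B)) (c : (G.induce (SP ∪ B)).Walk v v), c.IsCycle ∧ k ≤ c.length) := by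

  classical
  obtain ⟨hU, hE⟩ := hsep
  obtain ⟨v, c, hc, hck⟩ := hk
  by_cases hA : ∀ w ∈ c.support, w ∈ A
  · left
    exact ⟨⟨v, hA v c.start_mem_support⟩, c.toInduce hA, Walk.isCycle_toInduce hc hA,
      by rw [Walk.length_toInduce]; exact hck⟩
  by_cases hB : ∀ w ∈ c.support, w ∈ B
  · right
    have hB' : ∀ w ∈ c.support, w ∈ SP ∪ B := fun w hw => Or.inr (hB w hw)
    exact ⟨⟨v, hB' v c.start_mem_support⟩, c.toInduce hB', Walk.isCycle_toInduce hc hB',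
      by rw [Walk.length_toInduce]; exact hck⟩
  push_neg at hA hB
  obtain ⟨a, haS, haA⟩ := hA
  obtain ⟨b, hbS, hbB⟩ := hB
  have haB : a ∈ B := ((hU ▸ Set.mem_univ a : a ∈ A ∪ B)).resolve_left haA
  have hbA : b ∈ A := ((hU ▸ Set.mem_univ b : b ∈ A ∪ B)).resolve_right hbB
  have hE' : ∀ u ∈ B \ A, ∀ v ∈ A \ B, ¬ G.Adj u v :=
    fun u hu v hv hadj => hE v hv u hu hadj.symm
  have hU' : B ∪ A = Set.univ := by rw [Set.union_comm]; exact hU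
  have hclen : c.length ≠ 0 := by have := hc.three_le_length; omega
  have hab : a ≠ b := fun h => haA (h ▸ hbA)
  -- Step 1 : x and y lie on c
  have hc₀cyc := hc.rotate hbS
  have ha₀ : a ∈ (c.rotate b hbS).support :=
    (Walk.mem_support_rotate_iff' c hclen hbS).mpr haS
  obtain ⟨-, -, hq12, -⟩ := Walk.cycle_split hc₀cyc ha₀ hab
  obtain ⟨s1, hs1S, hs1AB⟩ :=
    Walk.crossing hU hE ((c.rotate b hbS).takeUntil a ha₀) hbA haA
  obtain ⟨s2, hs2S, hs2AB⟩ :=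
    Walk.crossing hU' hE' ((c.rotate b hbS).dropUntil a ha₀) haB hbB
  rw [hAB] at hs1AB
  rw [Set.inter_comm, hAB] at hs2AB
  have hbxy : b ∉ ({x, y} : Set V) := fun h => hbB (hAB ▸ h : b ∈ A ∩ B).2
  have haxy : a ∉ ({x, y} : Set V) := fun h => haA (hAB ▸ h : a ∈ A ∩ B).1
  have hne12 : s1 ≠ s2 := by
    rintro rfl
    rcases hq12 s1 hs1S hs2S with rfl | rfl
    · exact hbxy hs1AB
    · exact haxy hs1AB
  have hsub1 := Walk.support_takeUntil_subset (c.rotate b hbS) ha₀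
  have hsub2 := Walk.support_dropUntil_subset (c.rotate b hbS) ha₀
  have h1c : s1 ∈ c.support := (Walk.mem_support_rotate_iff' c hclen hbS).mp (hsub1 hs1S)
  have h2c : s2 ∈ c.support := (Walk.mem_support_rotate_iff' c hclen hbS).mp (hsub2 hs2S)
  simp only [Set.mem_insert_iff, Set.mem_singleton_iff] at hs1AB hs2AB
  have hxyc : x ∈ c.support ∧ y ∈ c.support := by
    rcases hs1AB with rfl | rfl <;> rcases hs2AB with rfl | rfl
    · exact absurd rfl hne12
    · exact ⟨h1c, h2c⟩
    · exact ⟨h2c, h1c⟩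
    · exact absurd rfl hne12
  obtain ⟨hxc, hyc⟩ := hxyc
  -- Step 2 : split the cycle at x and y
  have hc'cyc := hc.rotate hxc
  have hyc' : y ∈ (c.rotate x hxc).support :=
    (Walk.mem_support_rotate_iff' c hclen hxc).mpr hyc
  have hc'len : (c.rotate x hxc).length = c.length := Walk.length_rotate' c hxc
  obtain ⟨hqp, hrp, hqr, hqrlen⟩ := Walk.cycle_split hc'cyc hyc' (Ne.symm hxy)
  set q := (c.rotate x hxc).takeUntil y hyc' with hqdef
  set r := (c.rotate x hxc).dropUntil y hyc' with hrdef
  have hsideq := Walk.path_side hU hE hAB hqp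
  have hABr : A ∩ B = {y, x} := by rw [hAB, Set.pair_comm]
  have hsider := Walk.path_side hU hE hABr hrp
  have hmemc' : ∀ w ∈ (c.rotate x hxc).support, w ∈ q.support ∨ w ∈ r.support := by
    intro w hw
    rw [← Walk.take_spec (c.rotate x hxc) hyc', Walk.mem_support_append_iff] at hw
    exact hw
  have hac' : a ∈ (c.rotate x hxc).support := (Walk.mem_support_rotate_iff' c hclen hxc).mpr haS
  have hbc' : b ∈ (c.rotate x hxc).support := (Walk.mem_support_rotate_iff' c hclen hxc).mpr hbS
  -- Step 3 : extract the two arcs, one in A and one in B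
  obtain ⟨pA, pB, hpAp, hpBp, hpAA, hpBB, hsum⟩ :
      ∃ (pA : G.Walk x y) (pB : G.Walk y x), pA.IsPath ∧ pB.IsPath ∧
        (∀ w ∈ pA.support, w ∈ A) ∧ (∀ w ∈ pB.support, w ∈ B) ∧
        pA.length + pB.length = c.length := by
    rcases hsideq with hqA | hqB
    · have hrB : ∀ w ∈ r.support, w ∈ B := by
        rcases hsider with hrA | hrB
        · exfalso
          rcases hmemc' a hac' with h | h
          · exact haA (hqA a h)
          · exact haA (hrA a h)
        · exact hrB
      exact ⟨q, r, hqp, hrp, hqA, hrB, by rw [hc'len] at hqrlen; exact hqrlen⟩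
    · have hrA : ∀ w ∈ r.support, w ∈ A := by
        rcases hsider with hrA | hrB
        · exact hrA
        · exfalso
          rcases hmemc' b hbc' with h | h
          · exact hbB (hqB b h)
          · exact hbB (hrB b h)
      refine ⟨r.reverse, q.reverse, hrp.reverse, hqp.reverse, ?_, ?_, ?_⟩
      · intro w hw
        rw [Walk.support_reverse, List.mem_reverse] at hw
        exact hrA w hw
      · intro w hw
        rw [Walk.support_reverse, List.mem_reverse] at hw
        exact hqB w hw
      · rw [Walk.length_reverse, Walk.length_reverse, add_comm]
        rw [hc'len] at hqrlen
        exact hqrlen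
  rw [hc'len] at hqrlen
  clear hqr hmemc' hsideq hsider hqp hrp hqdef hrdef
  -- Step 4 : replace pA by the maximal path
  have hpAind : (pA.toInduce hpAA).IsPath := Walk.isPath_toInduce hpAp hpAA
  obtain ⟨p, hpPath, hpMax, hSPeq⟩ :=
    hSP.resolve_right (fun h => h.1 ⟨pA.toInduce hpAA, hpAind⟩)
  have hlenpA : pA.length ≤ p.length := by
    have := hpMax (pA.toInduce hpAA) hpAind
    rwa [Walk.length_toInduce] at this
  have hSPA : SP ⊆ A := by
    rw [hSPeq]
    rintro w ⟨u, -, rfl⟩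
    exact u.2
  set pV : G.Walk x y := p.map (Embedding.induce A).toHom with hpVdef
  have hpVpath : pV.IsPath :=
    (Walk.map_isPath_iff_of_injective Subtype.val_injective).mpr hpPath
  have hpVlen : pV.length = p.length := by exact Walk.length_map _ p
  have hpVsup : ∀ w, w ∈ pV.support ↔ w ∈ SP := by
    intro w
    rw [show pV.support = p.support.map (Embedding.induce A).toHom from Walk.support_map _ p, hSPeq]
    simp only [List.mem_map, Set.mem_image, Set.mem_setOf_eq]
    rfl
  -- basic length facts
  have hsum3 : 3 ≤ pA.length + pB.length := hsum ▸ hc.three_le_length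
  have hpBlen0 : pB.length ≠ 0 := fun h => hxy (Walk.eq_of_length_eq_zero h).symm
  have hpVlen0 : pV.length ≠ 0 := by
    intro h
    exact hxy (Walk.eq_of_length_eq_zero h)
  -- no common edges
  have hcommon : ∀ e ∈ pV.edges, e ∉ pB.edges := by
    intro e he1 he2
    induction e with
    | h u w =>
      have huA : u ∈ A := hSPA ((hpVsup u).mp (pV.fst_mem_support_of_mem_edges he1))
      have hwA : w ∈ A := hSPA ((hpVsup w).mp (pV.snd_mem_support_of_mem_edges he1))
      have huB : u ∈ B := pB.fst_mem_support_of_mem_edges he2 |> hpBB u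
      have hwB : w ∈ B := pB.snd_mem_support_of_mem_edges he2 |> hpBB w
      have huxy : u ∈ ({x, y} : Set V) := hAB ▸ (⟨huA, huB⟩ : u ∈ A ∩ B)
      have hwxy : w ∈ ({x, y} : Set V) := hAB ▸ (⟨hwA, hwB⟩ : w ∈ A ∩ B)
      have huw : u ≠ w := (pV.adj_of_mem_edges he1).ne
      simp only [Set.mem_insert_iff, Set.mem_singleton_iff] at huxy hwxy
      have hexy : s(u, w) = s(x, y) := by
        rcases huxy with rfl | rfl <;> rcases hwxy with rfl | rfl
        · exact absurd rfl huw
        · rfl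
        · exact Sym2.eq_swap
        · exact absurd rfl huw
      by_cases h2 : 2 ≤ pV.length
      · exact Walk.edge_ends_not_mem_edges hpVpath h2 (hexy ▸ he1)
      · have h2B : 2 ≤ pB.length := by
          have : pA.length ≤ pV.length := hpVlen ▸ hlenpA
          omega
        have : s(y, x) = s(u, w) := by rw [hexy]; exact Sym2.eq_swap
        exact Walk.edge_ends_not_mem_edges hpBp h2B (this ▸ he2)
  -- the new closed walk
  have hWtrail : (pV.append pB).IsTrail := by
    constructor
    rw [Walk.edges_append, List.nodup_append']
    exact ⟨hpVpath.isTrail.edges_nodup, hpBp.isTrail.edges_nodup, hcommon⟩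
  have hxpV : x ∉ pV.support.tail ∧ pV.support.tail.Nodup := by
    have := hpVpath.support_nodup
    rw [Walk.support_eq_cons, List.nodup_cons] at this
    exact this
  have hypB : y ∉ pB.support.tail ∧ pB.support.tail.Nodup := by
    have := hpBp.support_nodup
    rw [Walk.support_eq_cons, List.nodup_cons] at this
    exact this
  have hWnd : (pV.append pB).support.tail.Nodup := by
    rw [Walk.tail_support_append, List.nodup_append']
    refine ⟨hxpV.2, hypB.2, ?_⟩
    intro w hw1 hw2
    have hwA : w ∈ A := hSPA ((hpVsup w).mp (List.mem_of_mem_tail hw1))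
    have hwB : w ∈ B := hpBB w (List.mem_of_mem_tail hw2)
    have hwxy : w ∈ ({x, y} : Set V) := hAB ▸ (⟨hwA, hwB⟩ : w ∈ A ∩ B)
    simp only [Set.mem_insert_iff, Set.mem_singleton_iff] at hwxy
    rcases hwxy with rfl | rfl
    · exact hxpV.1 hw1
    · exact hypB.1 hw2
  have hWne : pV.append pB ≠ Walk.nil := by
    intro h
    have h0 : (pV.append pB).length = 0 := by rw [h]; rfl
    rw [Walk.length_append] at h0
    omega
  have hWcyc : (pV.append pB).IsCycle := ⟨⟨hWtrail, hWne⟩, hWnd⟩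
  have hWsup : ∀ w ∈ (pV.append pB).support, w ∈ SP ∪ B := by
    intro w hw
    rw [Walk.mem_support_append_iff] at hw
    rcases hw with hw | hw
    · exact Or.inl ((hpVsup w).mp hw)
    · exact Or.inr (hpBB w hw)
  right
  refine ⟨⟨x, hWsup x (Walk.start_mem_support _)⟩, (pV.append pB).toInduce hWsup,
    Walk.isCycle_toInduce hWcyc hWsup, ?_⟩
  rw [Walk.length_toInduce, Walk.length_append]
  omega
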